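/- Let z₀ ∈ D with μ(A⁰_{z₀}) = 0. Then μ(A⁺_{z₀} ∩ A⁻_z) → 0 and μ(A⁻_{z₀} ∩ A⁺_z) → 0 as z → z₀ in D. -/

import Mathlib

open Set MeasureTheory Filter

lemma aux_measure_mismatch {n : ℕ} (T : ℝ)
    (D : Set (EuclideanSpace ℝ (Fin n))) (hD : IsOpen D)
    (h : ℝ → EuclideanSpace ℝ (Fin n) → ℝ)
    (hhc : ContinuousOn (fun p : ℝ × EuclideanSpace ℝ (Fin n) => h p.1 p.2) (univ ×ˢ D))
    (z₀ : EuclideanSpace ℝ (Fin n)) (hz₀ : z₀ ∈ D) :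
    Tendsto (fun z => volume ({t ∈ Icc (0 : ℝ) T | 0 < h t z₀} ∩ {t ∈ Icc (0 : ℝ) T | h t z < 0}))
      (nhdsWithin z₀ D) (nhds 0) := by
  rw [ENNReal.tendsto_nhds_zero]
  intro ε hε
  set f : ℝ → ℝ := fun t => h t z₀ with hf_def
  have hf : ContinuousOn f (Icc (0 : ℝ) T) := by
    have : ContinuousOn (fun t : ℝ => ((t, z₀) : ℝ × EuclideanSpace ℝ (Fin n))) (Icc 0 T) :=
      (continuous_id.prodMk continuous_const).continuousOn
    exact hhc.comp this (fun t _ => ⟨mem_univ _, hz₀⟩)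
  set S : ℕ → Set ℝ := fun k => Icc (0 : ℝ) T ∩ f ⁻¹' Ioo 0 (1 / (k + 1)) with hS_def
  have hSmeas : ∀ k, MeasurableSet (S k) := by
    intro k
    obtain ⟨u, hu, hueq⟩ := continuousOn_iff'.1 hf (Ioo 0 (1 / (k + 1))) isOpen_Ioo
    have : S k = u ∩ Icc 0 T := by
      simp only [hS_def]; rw [inter_comm (Icc (0:ℝ) T)]; exact hueq
    rw [this]; exact hu.measurableSet.inter measurableSet_Icc
  have hanti : Antitone S := by
    intro k l hkl t ht
    refine ⟨ht.1, ht.2.1, lt_of_lt_of_le ht.2.2 ?_⟩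
    apply one_div_le_one_div_of_le (by positivity)
    exact_mod_cast by exact_mod_cast add_le_add_left (Nat.cast_le.2 hkl) 1
  have hiInter : ⋂ k, S k = ∅ := by
    ext t
    simp only [mem_iInter, mem_empty_iff_false, iff_false]
    intro ht
    obtain ⟨k, hk⟩ := exists_nat_gt (1 / f t)
    have h1 := (ht k).2
    have hpos : 0 < f t := h1.1
    have : 1 / f t < k + 1 := hk.trans (by linarith)
    have : 1 / (k + 1 : ℝ) < f t := by
      rw [div_lt_iff₀ (by positivity)] at this ⊢
      · nlinarith
    exact absurd h1.2 (not_lt.2 this.le)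
  have hfin : ∃ k, volume (S k) ≠ ⊤ := by
    refine ⟨0, ?_⟩
    exact ne_top_of_le_ne_top (by simp [Real.volume_Icc]) (measure_mono inter_subset_left)
  have htend := tendsto_measure_iInter_atTop
      (fun k => (hSmeas k).nullMeasurableSet) hanti hfin
  rw [hiInter, measure_empty] at htend
  obtain ⟨k, hk⟩ : ∃ k, volume (S k) ≤ ε := (htend.eventually_le_const hε).exists
  set δ : ℝ := 1 / (k + 1) with hδ_def
  have hδpos : 0 < δ := by positivity
  set K : Set ℝ := Icc (0 : ℝ) T ∩ f ⁻¹' Ici δ with hK_def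
  have hKclosed : IsClosed K := hf.preimage_isClosed_of_isClosed isClosed_Icc isClosed_Ici
  have hKcomp : IsCompact K := isCompact_Icc.of_isClosed_subset hKclosed inter_subset_left
  set W : Set (ℝ × EuclideanSpace ℝ (Fin n)) :=
    (univ ×ˢ D) ∩ (fun p : ℝ × EuclideanSpace ℝ (Fin n) => h p.1 p.2) ⁻¹' Ioi 0 with hW_def
  have hWopen : IsOpen W := hhc.isOpen_inter_preimage (isOpen_univ.prod hD) isOpen_Ioi
  have hsub : K ×ˢ ({z₀} : Set (EuclideanSpace ℝ (Fin n))) ⊆ W := by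
    rintro ⟨t, z⟩ ⟨htK, hz⟩
    simp only [mem_singleton_iff] at hz
    subst hz
    exact ⟨⟨mem_univ _, hz₀⟩, lt_of_lt_of_le hδpos htK.2⟩
  obtain ⟨u, v, huo, hvo, hKu, hzv, huv⟩ :=
    generalized_tube_lemma hKcomp isCompact_singleton hWopen hsub
  filter_upwards [nhdsWithin_le_nhds (hvo.mem_nhds (hzv rfl))] with z hzv'
  refine le_trans (measure_mono ?_) hk
  rintro t ⟨⟨ht1, ht2⟩, ⟨_, ht3⟩⟩
  refine ⟨ht1, ht2, ?_⟩
  by_contra hcon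
  have htK : t ∈ K := ⟨ht1, not_lt.1 hcon⟩
  have : (t, z) ∈ W := huv ⟨hKu htK, hzv'⟩
  exact absurd this.2 (not_lt.2 ht3.le)

/-- If `μ(A⁰_{z₀}) = 0`, then `μ(A⁺_{z₀} ∩ A⁻_z) → 0` and `μ(A⁻_{z₀} ∩ A⁺_z) → 0`
as `z → z₀` in `D`. -/
theorem measure_mismatch_tendsto_zero {n : ℕ} (T : ℝ) (hT : 0 < T)
    (D : Set (EuclideanSpace ℝ (Fin n))) (hD : IsOpen D)
    (h : ℝ → EuclideanSpace ℝ (Fin n) → ℝ)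
    (hhc : ContinuousOn (fun p : ℝ × EuclideanSpace ℝ (Fin n) => h p.1 p.2) (univ ×ˢ D))
    (hhper : ∀ t x, h (t + T) x = h t x)
    (z₀ : EuclideanSpace ℝ (Fin n)) (hz₀ : z₀ ∈ D)
    (hA0 : volume {t ∈ Icc (0 : ℝ) T | h t z₀ = 0} = 0) :
    Tendsto (fun z => volume ({t ∈ Icc (0 : ℝ) T | 0 < h t z₀} ∩ {t ∈ Icc (0 : ℝ) T | h t z < 0}))
      (nhdsWithin z₀ D) (nhds 0) ∧
    Tendsto (fun z => volume ({t ∈ Icc (0 : ℝ) T | h t z₀ < 0} ∩ {t ∈ Icc (0 : ℝ) T | 0 < h t z}))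
      (nhdsWithin z₀ D) (nhds 0) := by
  constructor
  · exact aux_measure_mismatch T D hD h hhc z₀ hz₀
  · have := aux_measure_mismatch T D hD (fun t x => -h t x) hhc.neg z₀ hz₀
    simpa only [neg_pos, neg_lt_zero] using this
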